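/- Let k ≥ 3 and e ≥ 0 be integers and let n = k^e, so the deck has k^{e+1} cards. Identify each x ∈ [k^{e+1}] with its base-k digit sequence (d_0(x), ..., d_e(x)), where d_i(x) = ⌊x/k^i⌋ mod k. Then the shuffle group G_{k, k^{e+1}} consists exactly of those permutations g of [k^{e+1}] for which there exist r ∈ Z/(e+1)Z and permutations τ_0, ..., τ_e of [k] such that for every x ∈ [k^{e+1}] and every i ∈ {0, ..., e}, the i-th base-k digit of g(x) equals τ_i(d_{(i+r) mod (e+1)}(x)). (That is, G_{k,k^{e+1}} is the primitive wreath product of Sym([k]) by the cyclic group of order e+1, in its product action on digit sequences.) -/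

import Mathlib

lemma shuffleAux.div_lt (k n : ℕ) (x : Fin (k * n)) : (x : ℕ) / n < k := by
  have hx := x.isLt
  have hn : 0 < n := by
    rcases Nat.eq_zero_or_pos n with rfl | h
    · simp at hx
    · exact h
  exact (Nat.div_lt_iff_lt_mul hn).mpr hx

lemma shuffleAux.mod_lt (k n : ℕ) (x : Fin (k * n)) : (x : ℕ) % n < n := by
  have hx := x.isLt
  have hn : 0 < n := by
    rcases Nat.eq_zero_or_pos n with rfl | h
    · simp at hx
    · exact h
  exact Nat.mod_lt _ hn

lemma shuffleAux.bound1 (k n : ℕ) (x : Fin (k * n)) :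
    k * ((x : ℕ) % n) + (x : ℕ) / n < k * n := by
  have h1 := shuffleAux.mod_lt k n x
  have h2 := shuffleAux.div_lt k n x
  calc k * ((x : ℕ) % n) + (x : ℕ) / n
      < k * ((x : ℕ) % n) + k := by omega
    _ = k * ((x : ℕ) % n + 1) := by ring
    _ ≤ k * n := Nat.mul_le_mul_left _ (by omega)

lemma shuffleAux.bound2 (k n : ℕ) (x : Fin (k * n)) (j : Fin k) :
    (x : ℕ) % n + (j : ℕ) * n < k * n := by
  have h1 := shuffleAux.mod_lt k n x
  have h2 := j.isLt
  calc (x : ℕ) % n + (j : ℕ) * n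
      < n + (j : ℕ) * n := by omega
    _ = ((j : ℕ) + 1) * n := by ring
    _ ≤ k * n := Nat.mul_le_mul_right _ (by omega)

/-- The standard shuffle `σ` on a deck of `k * n` cards, where the card in position
`i + j·n` (`i ∈ [n]`, `j ∈ [k]`) is sent to position `k·i + j`; equivalently
`σ(x) = k·(x mod n) + ⌊x / n⌋`. -/
noncomputable def stdShuffle (k n : ℕ) : Equiv.Perm (Fin (k * n)) :=
  Equiv.ofBijective
    (fun x => ⟨k * ((x : ℕ) % n) + (x : ℕ) / n, shuffleAux.bound1 k n x⟩)
    (Finite.injective_iff_bijective.mp (by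
      intro x y hxy
      simp only [Fin.mk.injEq] at hxy
      have hk : 0 < k := lt_of_le_of_lt (Nat.zero_le _) (shuffleAux.div_lt k n x)
      have key : ∀ z : Fin (k * n),
          (k * ((z : ℕ) % n) + (z : ℕ) / n) % k = (z : ℕ) / n ∧
          (k * ((z : ℕ) % n) + (z : ℕ) / n) / k = (z : ℕ) % n := by
        intro z
        have hz := shuffleAux.div_lt k n z
        constructor
        · rw [Nat.mul_add_mod, Nat.mod_eq_of_lt hz]
        · rw [Nat.mul_add_div hk, Nat.div_eq_of_lt hz, Nat.add_zero]
      obtain ⟨h1x, h2x⟩ := key x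
      obtain ⟨h1y, h2y⟩ := key y
      rw [hxy] at h1x h2x
      have hd : (x : ℕ) / n = (y : ℕ) / n := by omega
      have hm : (x : ℕ) % n = (y : ℕ) % n := by omega
      apply Fin.ext
      rw [← Nat.div_add_mod (x : ℕ) n, ← Nat.div_add_mod (y : ℕ) n, hd, hm]))

/-- The permutation `ρ_τ` induced by a permutation `τ` of the `k` piles:
`ρ_τ(i + j·n) = i + τ(j)·n` for `i ∈ [n]`, `j ∈ [k]`. -/
noncomputable def pilePerm (k n : ℕ) (τ : Equiv.Perm (Fin k)) : Equiv.Perm (Fin (k * n)) :=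
  Equiv.ofBijective
    (fun x => ⟨(x : ℕ) % n + ((τ ⟨(x : ℕ) / n, shuffleAux.div_lt k n x⟩ : Fin k) : ℕ) * n,
      shuffleAux.bound2 k n x _⟩)
    (Finite.injective_iff_bijective.mp (by
      intro x y hxy
      simp only [Fin.mk.injEq] at hxy
      have hn : 0 < n := lt_of_le_of_lt (Nat.zero_le _) (shuffleAux.mod_lt k n x)
      have key : ∀ z : Fin (k * n),
          ((z : ℕ) % n + ((τ ⟨(z : ℕ) / n, shuffleAux.div_lt k n z⟩ : Fin k) : ℕ) * n) % n
            = (z : ℕ) % n ∧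
          ((z : ℕ) % n + ((τ ⟨(z : ℕ) / n, shuffleAux.div_lt k n z⟩ : Fin k) : ℕ) * n) / n
            = ((τ ⟨(z : ℕ) / n, shuffleAux.div_lt k n z⟩ : Fin k) : ℕ) := by
        intro z
        have h1 := shuffleAux.mod_lt k n z
        constructor
        · rw [Nat.add_mul_mod_self_right, Nat.mod_eq_of_lt h1]
        · rw [Nat.add_mul_div_right _ _ hn, Nat.div_eq_of_lt h1, Nat.zero_add]
      obtain ⟨h1x, h2x⟩ := key x
      obtain ⟨h1y, h2y⟩ := key y
      rw [hxy] at h1x h2x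
      have hm : (x : ℕ) % n = (y : ℕ) % n := by omega
      have hv : ((τ ⟨(x : ℕ) / n, shuffleAux.div_lt k n x⟩ : Fin k) : ℕ)
          = ((τ ⟨(y : ℕ) / n, shuffleAux.div_lt k n y⟩ : Fin k) : ℕ) := by omega
      have hτ : (⟨(x : ℕ) / n, shuffleAux.div_lt k n x⟩ : Fin k)
          = ⟨(y : ℕ) / n, shuffleAux.div_lt k n y⟩ := τ.injective (Fin.ext hv)
      have hd : (x : ℕ) / n = (y : ℕ) / n := congrArg Fin.val hτ
      apply Fin.ext
      rw [← Nat.div_add_mod (x : ℕ) n, ← Nat.div_add_mod (y : ℕ) n, hd, hm]))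

/-- The shuffle group `G_{k,kn}`, generated by the standard shuffle `σ` together with
the pile permutations `ρ_τ` for all `τ ∈ Sym([k])`. -/
noncomputable def shuffleGroup (k n : ℕ) : Subgroup (Equiv.Perm (Fin (k * n))) :=
  Subgroup.closure ({stdShuffle k n} ∪ Set.range (pilePerm k n))


namespace ShuffleWreath

variable {k e : ℕ}

open Fin.CommRing

/-- Two naturals below `k^m` with the same base-`k` digits are equal. -/
lemma eq_of_digits (k : ℕ) : ∀ (m a b : ℕ), a < k ^ m → b < k ^ m →
    (∀ i, i < m → a / k ^ i % k = b / k ^ i % k) → a = b := by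
  intro m
  induction m with
  | zero => intro a b ha hb _; simp [pow_zero] at ha hb; omega
  | succ m ih =>
    intro a b ha hb h
    have hk : 0 < k := Nat.pos_of_ne_zero (by rintro rfl; simp at ha)
    have h0 : a % k = b % k := by
      have := h 0 (by omega); simpa using this
    have hdig : ∀ i, i < m → a / k / k ^ i % k = b / k / k ^ i % k := by
      intro i hi
      have := h (i + 1) (by omega)
      rw [pow_succ', ← Nat.div_div_eq_div_mul, ← Nat.div_div_eq_div_mul] at this
      exact this
    have hal : a / k < k ^ m := by
      rw [Nat.div_lt_iff_lt_mul hk]; rw [pow_succ] at ha; exact ha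
    have hbl : b / k < k ^ m := by
      rw [Nat.div_lt_iff_lt_mul hk]; rw [pow_succ] at hb; exact hb
    have h1 := ih (a / k) (b / k) hal hbl hdig
    rw [← Nat.div_add_mod a k, ← Nat.div_add_mod b k, h0, h1]

lemma mod_pow_div (k x j e' : ℕ) (hj : j < e') :
    x % k ^ e' / k ^ j % k = x / k ^ j % k := by
  rw [← Nat.mod_mul_right_div_self, ← Nat.mod_mul_right_div_self,
    Nat.mod_mod_of_dvd x (by rw [← pow_succ]; exact pow_dvd_pow k (by omega))]

/-- The `m`-th base-`k` digit of `x`, as an element of `Fin k`. -/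
def dF (hk : 0 < k) (m : Fin (e + 1)) (x : ℕ) : Fin k :=
  ⟨x / k ^ (m : ℕ) % k, Nat.mod_lt _ hk⟩

/-- The wreath-product digit condition. -/
def Sat (hk : 0 < k) (g : Equiv.Perm (Fin (k * k ^ e))) (r : Fin (e + 1))
    (τ : Fin (e + 1) → Equiv.Perm (Fin k)) : Prop :=
  ∀ (x : Fin (k * k ^ e)) (i : Fin (e + 1)),
    ((g x : ℕ) / k ^ (i : ℕ)) % k = ((τ i) (dF hk (i + r) (x : ℕ)) : ℕ)

variable (hk : 0 < k)

lemma Sat.of_eq {g r τ r' τ'} (h : Sat (e := e) hk g r τ) (hr : r = r')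
    (hτ : ∀ i, τ i = τ' i) : Sat hk g r' τ' := by
  subst hr
  intro x i
  rw [← hτ i]
  exact h x i

lemma Sat.one : Sat (e := e) hk 1 0 (fun _ => 1) := by
  intro x i
  simp [dF]

lemma Sat.mul {g h r s τ υ} (hg : Sat (e := e) hk g r τ) (hh : Sat hk h s υ) :
    Sat hk (h * g) (r + s) (fun i => υ i * τ (i + s)) := by
  intro x i
  have H1 := hh (g x) i
  have H2 := hg x (i + s)
  have hidx : i + s + r = i + (r + s) := by rw [add_assoc, add_comm s r]
  rw [hidx] at H2
  have HF : dF hk (i + s) ((g x : ℕ)) = (τ (i + s)) (dF hk (i + (r + s)) (x : ℕ)) :=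
    Fin.ext H2
  calc (((h * g) x : ℕ) / k ^ (i : ℕ)) % k
      = ((h (g x) : ℕ) / k ^ (i : ℕ)) % k := rfl
    _ = ((υ i) (dF hk (i + s) ((g x : ℕ))) : ℕ) := H1
    _ = _ := by rw [HF]; rfl

lemma Sat.inv {g r τ} (hg : Sat (e := e) hk g r τ) :
    Sat hk g⁻¹ (-r) (fun i => (τ (i + -r))⁻¹) := by
  intro x i
  have hji : (i + -r) + r = i := by rw [add_assoc, neg_add_cancel, add_zero]
  have H := hg (g⁻¹ x) (i + -r)
  rw [hji, ← Equiv.Perm.mul_apply, mul_inv_cancel, Equiv.Perm.one_apply] at H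
  have HF : (τ (i + -r)) (dF hk i ((g⁻¹ x : ℕ))) = dF hk (i + -r) (x : ℕ) :=
    Fin.ext H.symm
  have h2 : dF hk i ((g⁻¹ x : ℕ)) = (τ (i + -r))⁻¹ (dF hk (i + -r) (x : ℕ)) := by
    rw [← HF, ← Equiv.Perm.mul_apply, inv_mul_cancel, Equiv.Perm.one_apply]
  exact congrArg Fin.val h2

lemma sat_unique {g h r τ} (hg : Sat (e := e) hk g r τ) (hh : Sat hk h r τ) : g = h := by
  apply Equiv.ext
  intro x
  apply Fin.ext
  have hb : ∀ y : Fin (k * k ^ e), (y : ℕ) < k ^ (e + 1) := by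
    intro y
    have h1 := y.isLt
    have h2 : k * k ^ e = k ^ (e + 1) := by rw [pow_succ, Nat.mul_comm]
    omega
  apply eq_of_digits k (e + 1) _ _ (hb _) (hb _)
  intro i hi
  rw [hg x ⟨i, hi⟩, hh x ⟨i, hi⟩]

lemma digit_add_high (hk : 0 < k) (a c i : ℕ) (hi : i < e) :
    (a + c * k ^ e) / k ^ i % k = a / k ^ i % k := by
  have hexp : (e - i - 1) + 1 + i = e := by omega
  have h1 : k ^ (e - i - 1) * k * k ^ i = k ^ e := by
    rw [← pow_succ, ← pow_add, hexp]
  rw [← h1, show c * (k ^ (e - i - 1) * k * k ^ i) = c * k ^ (e - i - 1) * k * k ^ i by ring,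
    show a + c * k ^ (e - i - 1) * k * k ^ i = a + (c * k ^ (e - i - 1) * k) * k ^ i by ring,
    Nat.add_mul_div_right _ _ (pow_pos hk i), Nat.add_mul_mod_self_right]

/-- The standard shuffle satisfies the digit condition with `r = -1` and identity `τ`. -/
lemma sat_std : Sat (e := e) hk (stdShuffle k (k ^ e)) ⟨e, by omega⟩ (fun _ => 1) := by
  intro x i
  have happ : ((stdShuffle k (k ^ e)) x : ℕ) = k * ((x : ℕ) % k ^ e) + (x : ℕ) / k ^ e := by
    simp [stdShuffle]
  have hb : (x : ℕ) / k ^ e < k := shuffleAux.div_lt k (k ^ e) x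
  simp only [Equiv.Perm.one_apply]
  rw [happ]
  show _ = (x : ℕ) / k ^ ((i + ⟨e, by omega⟩ : Fin (e + 1)) : ℕ) % k
  obtain ⟨iv, hiv⟩ := i
  cases iv with
  | zero =>
    have hidx : ((⟨0, hiv⟩ + ⟨e, by omega⟩ : Fin (e + 1)) : ℕ) = e := by
      rw [Fin.add_def]
      show (0 + e) % (e + 1) = e
      rw [Nat.zero_add]
      exact Nat.mod_eq_of_lt (by omega)
    rw [hidx]
    show (k * ((x : ℕ) % k ^ e) + (x : ℕ) / k ^ e) / k ^ 0 % k = _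
    rw [pow_zero, Nat.div_one, Nat.mul_add_mod, Nat.mod_eq_of_lt hb]
  | succ j =>
    have hj : j < e := by omega
    have hidx : ((⟨j + 1, hiv⟩ + ⟨e, by omega⟩ : Fin (e + 1)) : ℕ) = j := by
      rw [Fin.add_def]
      show (j + 1 + e) % (e + 1) = j
      rw [show j + 1 + e = (e + 1) + j by omega, Nat.add_mod_left]
      exact Nat.mod_eq_of_lt (by omega)
    rw [hidx]
    show (k * ((x : ℕ) % k ^ e) + (x : ℕ) / k ^ e) / k ^ (j + 1) % k = _
    rw [pow_succ', ← Nat.div_div_eq_div_mul, Nat.mul_add_div hk,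
      Nat.div_eq_of_lt hb, Nat.add_zero, mod_pow_div k _ j e hj]

/-- The pile permutation satisfies the digit condition with `r = 0` and `τ` acting
on the top digit only. -/
lemma sat_pile (τ0 : Equiv.Perm (Fin k)) :
    Sat (e := e) hk (pilePerm k (k ^ e) τ0) 0
      (fun i => if (i : ℕ) = e then τ0 else 1) := by
  intro x i
  have happ : ((pilePerm k (k ^ e) τ0) x : ℕ) =
      (x : ℕ) % k ^ e +
        ((τ0 ⟨(x : ℕ) / k ^ e, shuffleAux.div_lt k (k ^ e) x⟩ : Fin k) : ℕ) * k ^ e := by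
    simp [pilePerm]
  set c : ℕ := ((τ0 ⟨(x : ℕ) / k ^ e, shuffleAux.div_lt k (k ^ e) x⟩ : Fin k) : ℕ) with hc
  have hcb : c < k := (τ0 _).isLt
  rw [add_zero, happ]
  by_cases hie : (i : ℕ) = e
  · beta_reduce
    rw [if_pos hie]
    have harg : dF hk i ((x : ℕ)) =
        ⟨(x : ℕ) / k ^ e, shuffleAux.div_lt k (k ^ e) x⟩ := by
      apply Fin.ext
      show (x : ℕ) / k ^ ((i : Fin (e + 1)) : ℕ) % k = (x : ℕ) / k ^ e
      rw [hie]
      exact Nat.mod_eq_of_lt (shuffleAux.div_lt k (k ^ e) x)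
    rw [harg]
    show ((x : ℕ) % k ^ e + c * k ^ e) / k ^ ((i : Fin (e + 1)) : ℕ) % k = c
    rw [hie, Nat.add_mul_div_right _ _ (pow_pos hk e),
      Nat.div_eq_of_lt (Nat.mod_lt _ (pow_pos hk e)), Nat.zero_add,
      Nat.mod_eq_of_lt hcb]
  · beta_reduce
    rw [if_neg hie, Equiv.Perm.one_apply]
    have hie' : (i : ℕ) < e := by
      have := i.isLt; omega
    show ((x : ℕ) % k ^ e + c * k ^ e) / k ^ ((i : Fin (e + 1)) : ℕ) % k
      = (x : ℕ) / k ^ ((i : Fin (e + 1)) : ℕ) % k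
    rw [digit_add_high hk _ _ _ hie', mod_pow_div k _ _ e hie']

lemma std_mem : stdShuffle k (k ^ e) ∈ shuffleGroup k (k ^ e) :=
  Subgroup.subset_closure (Or.inl rfl)

lemma pile_mem (τ0 : Equiv.Perm (Fin k)) : pilePerm k (k ^ e) τ0 ∈ shuffleGroup k (k ^ e) :=
  Subgroup.subset_closure (Or.inr ⟨τ0, rfl⟩)

lemma exists_sat_neg_cast (a : ℕ) :
    ∃ g ∈ shuffleGroup k (k ^ e), Sat hk g (-(a : Fin (e + 1))) (fun _ => 1) := by
  induction a with
  | zero =>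
    exact ⟨1, one_mem _, Sat.of_eq hk (Sat.one hk) (by simp) (fun _ => rfl)⟩
  | succ a ih =>
    obtain ⟨g, hgG, hgs⟩ := ih
    refine ⟨stdShuffle k (k ^ e) * g, mul_mem std_mem hgG, ?_⟩
    have h1 := Sat.mul hk hgs (sat_std hk)
    refine Sat.of_eq hk h1 ?_ (fun i => by simp)
    have he : (⟨e, by omega⟩ : Fin (e + 1)) = -1 := by
      apply Fin.ext; rw [Fin.coe_neg_one]
    rw [he]
    push_cast
    ring

lemma exists_sat_r (r : Fin (e + 1)) :
    ∃ g ∈ shuffleGroup k (k ^ e), Sat hk g r (fun _ => 1) := by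
  obtain ⟨g, hgG, hgs⟩ := exists_sat_neg_cast hk (e + 1 - (r : ℕ))
  refine ⟨g, hgG, Sat.of_eq hk hgs ?_ (fun _ => rfl)⟩
  have h1 : ((e + 1 - (r : ℕ) : ℕ) : Fin (e + 1)) + r = 0 := by
    have h0 : ((e + 1 - (r : ℕ) : ℕ) : Fin (e + 1)) + (((r : ℕ) : ℕ) : Fin (e + 1))
        = (((e + 1 : ℕ)) : Fin (e + 1)) := by
      rw [← Nat.cast_add]
      congr 1
      have := r.isLt
      omega
    rwa [Fin.cast_val_eq_self, Fin.natCast_self] at h0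
  have h2 := neg_eq_of_add_eq_zero_left h1
  rw [← h2, neg_neg]

lemma exists_sat_single (j : Fin (e + 1)) (τ0 : Equiv.Perm (Fin k)) :
    ∃ g ∈ shuffleGroup k (k ^ e), Sat hk g 0 (fun i => if i = j then τ0 else 1) := by
  obtain ⟨u, huG, hus⟩ := exists_sat_r hk (j + 1)
  obtain ⟨u', hu'G, hu's⟩ := exists_sat_r hk (-(j + 1))
  refine ⟨u' * (pilePerm k (k ^ e) τ0 * u),
    mul_mem hu'G (mul_mem (pile_mem τ0) huG), ?_⟩
  have h1 := Sat.mul hk hus (sat_pile hk τ0)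
  have h2 := Sat.mul hk h1 hu's
  refine Sat.of_eq hk h2 ?_ ?_
  · rw [add_zero, add_neg_cancel]
  · intro i
    simp only [one_mul, mul_one]
    have hiff : (((i + -(j + 1) : Fin (e + 1)) : ℕ) = e) ↔ i = j := by
      constructor
      · intro h
        have ha : i + -(j + 1) = -1 := by
          apply Fin.ext
          rw [h, Fin.coe_neg_one]
        have hb : i = -1 + (j + 1) := by
          rw [add_neg_eq_iff_eq_add] at ha
          exact ha
        rw [hb]
        ring
      · rintro rfl
        have ha : (i : Fin (e + 1)) + -(i + 1) = -1 := by ring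
        rw [ha, Fin.coe_neg_one]
    by_cases h : i = j
    · rw [if_pos (hiff.mpr h), if_pos h]
    · rw [if_neg (fun hc => h (hiff.mp hc)), if_neg h]

lemma exists_sat_diag (τ : Fin (e + 1) → Equiv.Perm (Fin k)) :
    ∃ g ∈ shuffleGroup k (k ^ e), Sat hk g 0 τ := by
  have key : ∀ s : Finset (Fin (e + 1)),
      ∃ g ∈ shuffleGroup k (k ^ e), Sat hk g 0 (fun i => if i ∈ s then τ i else 1) := by
    intro s
    induction s using Finset.induction_on with
    | empty =>
      exact ⟨1, one_mem _, Sat.of_eq hk (Sat.one hk) rfl (fun i => by simp)⟩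
    | @insert j s hj ih =>
      obtain ⟨g, hgG, hgs⟩ := ih
      obtain ⟨b, hbG, hbs⟩ := exists_sat_single hk j (τ j)
      refine ⟨b * g, mul_mem hbG hgG, ?_⟩
      have h1 := Sat.mul hk hgs hbs
      refine Sat.of_eq hk h1 (by rw [add_zero]) ?_
      intro i
      simp only [add_zero]
      by_cases hij : i = j
      · subst hij
        rw [if_pos rfl, if_neg hj, mul_one, if_pos (Finset.mem_insert_self i s)]
      · rw [if_neg hij, one_mul]
        by_cases his : i ∈ s
        · rw [if_pos his, if_pos (Finset.mem_insert_of_mem his)]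
        · rw [if_neg his, if_neg (by simp [Finset.mem_insert, hij, his])]
  obtain ⟨g, hgG, hgs⟩ := key Finset.univ
  exact ⟨g, hgG, Sat.of_eq hk hgs rfl (fun i => by simp)⟩

lemma exists_sat (r : Fin (e + 1)) (τ : Fin (e + 1) → Equiv.Perm (Fin k)) :
    ∃ g ∈ shuffleGroup k (k ^ e), Sat hk g r τ := by
  obtain ⟨g0, hg0G, hg0s⟩ := exists_sat_diag hk (fun i => τ (i - r))
  obtain ⟨u, huG, hus⟩ := exists_sat_r hk r
  refine ⟨u * g0, mul_mem huG hg0G, ?_⟩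
  have h1 := Sat.mul hk hg0s hus
  refine Sat.of_eq hk h1 (zero_add r) ?_
  intro i
  rw [one_mul, add_sub_cancel_right]

/-- The wreath-like permutations form a subgroup. -/
def W : Subgroup (Equiv.Perm (Fin (k * k ^ e))) where
  carrier := {g | ∃ r τ, Sat (e := e) hk g r τ}
  one_mem' := ⟨0, fun _ => 1, Sat.one hk⟩
  mul_mem' := by
    rintro a b ⟨r, τ, ha⟩ ⟨s, υ, hb⟩
    exact ⟨s + r, _, Sat.mul hk hb ha⟩
  inv_mem' := by
    rintro a ⟨r, τ, ha⟩
    exact ⟨-r, _, Sat.inv hk ha⟩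

lemma shuffleGroup_le_W : shuffleGroup k (k ^ e) ≤ W hk := by
  apply (Subgroup.closure_le _).mpr
  rintro g (hg | ⟨τ0, rfl⟩)
  · rw [Set.mem_singleton_iff] at hg
    subst hg
    exact ⟨⟨e, by omega⟩, fun _ => 1, sat_std hk⟩
  · exact ⟨0, _, sat_pile hk τ0⟩

end ShuffleWreath

theorem shuffleGroup_eq_wreath (k e : ℕ) (hk : 3 ≤ k) :
    (shuffleGroup k (k ^ e) : Set (Equiv.Perm (Fin (k * k ^ e)))) =
      {g : Equiv.Perm (Fin (k * k ^ e)) |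
        ∃ (r : Fin (e + 1)) (τ : Fin (e + 1) → Equiv.Perm (Fin k)),
          ∀ (x : Fin (k * k ^ e)) (i : Fin (e + 1)),
            ((g x : ℕ) / k ^ (i : ℕ)) % k =
              ((τ i) ⟨((x : ℕ) / k ^ (((i + r : Fin (e + 1))) : ℕ)) % k,
                Nat.mod_lt _ (by omega)⟩ : ℕ)} := by
  have hk0 : 0 < k := by omega
  ext g
  simp only [Set.mem_setOf_eq, SetLike.mem_coe]
  constructor
  · intro hg
    obtain ⟨r, τ, hs⟩ := ShuffleWreath.shuffleGroup_le_W hk0 hg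
    exact ⟨r, τ, hs⟩
  · rintro ⟨r, τ, hs⟩
    obtain ⟨g', hg', hs'⟩ := ShuffleWreath.exists_sat hk0 r τ
    have hgg : g = g' := ShuffleWreath.sat_unique hk0 (fun x i => hs x i) hs'
    rw [hgg]
    exact hg'
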